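/- Let p be an odd prime, let m ∈ {1, 2, ..., p−1} be an integer, and let s be a p-adic integer. Then the generalized binomial coefficient C(m + ps − 1, p−1) satisfies C(m + ps − 1, p−1) ≡ ps/m − p²s²/m² + (p²s/m)·H_m (mod p³), where H_m = ∑_{k=1}^m 1/k is the m-th harmonic number. -/

import Mathlib

open Finset

/-- Generalized binomial coefficient `C(x,k) = x(x-1)⋯(x-k+1)/k!`. -/
noncomputable def gbinom {K : Type*} [Field K] [CharZero K] (x : K) (k : ℕ) : K :=
  (∏ i ∈ Finset.range k, (x - i)) / (k.factorial : K)

variable {p : ℕ} [hpp : Fact p.Prime]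

lemma pnorm_sum_le {ι : Type*} (s : Finset ι) (f : ι → ℚ_[p]) {C : ℝ} (hC : 0 ≤ C)
    (h : ∀ i ∈ s, ‖f i‖ ≤ C) : ‖∑ i ∈ s, f i‖ ≤ C := by
  classical
  induction s using Finset.induction_on with
  | empty => simpa using hC
  | @insert x t hxt ih =>
    rw [Finset.sum_insert hxt]
    exact le_trans (Padic.nonarchimedean _ _)
      (max_le (h _ (Finset.mem_insert_self _ _)) (ih fun i hi => h _ (Finset.mem_insert_of_mem hi)))

lemma pnorm_triple {a b c : ℚ_[p]} {C : ℝ} (ha : ‖a‖ ≤ C) (hb : ‖b‖ ≤ C) (hc : ‖c‖ ≤ C) :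
    ‖a + b + c‖ ≤ C :=
  le_trans (Padic.nonarchimedean _ _)
    (max_le (le_trans (Padic.nonarchimedean _ _) (max_le ha hb)) hc)

lemma pnorm_prod_le {ι : Type*} (s : Finset ι) (f : ι → ℚ_[p])
    (h : ∀ i ∈ s, ‖f i‖ ≤ 1) : ‖∏ i ∈ s, f i‖ ≤ 1 := by
  classical
  induction s using Finset.induction_on with
  | empty => simp
  | insert _ _ hx ih =>
    rw [Finset.prod_insert hx, norm_mul]
    exact mul_le_one₀ (h _ (Finset.mem_insert_self _ _)) (norm_nonneg _)
      (ih fun i hi => h _ (Finset.mem_insert_of_mem hi))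

-- key product expansion
lemma key_prod {ι : Type*} [DecidableEq ι] (s : Finset ι) (a : ι → ℚ_[p])
    (ha : ∀ i ∈ s, ‖a i‖ ≤ 1) (ε : ℚ_[p]) (hε : ‖ε‖ ≤ 1) :
    ‖(∏ i ∈ s, (a i + ε)) - (∏ i ∈ s, a i) -
      ε * ∑ j ∈ s, ∏ i ∈ s.erase j, a i‖ ≤ ‖ε‖ ^ 2 := by
  induction s using Finset.induction_on with
  | empty => simp [sq_nonneg]
  | @insert x t hxt ih =>
    have ha' : ∀ i ∈ t, ‖a i‖ ≤ 1 := fun i hi => ha i (Finset.mem_insert_of_mem hi)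
    have hE := ih ha'
    set S := ∑ j ∈ t, ∏ i ∈ t.erase j, a i with hS
    set E := (∏ i ∈ t, (a i + ε)) - (∏ i ∈ t, a i) - ε * S with hEdef
    have hProd : (∏ i ∈ t, (a i + ε)) = (∏ i ∈ t, a i) + ε * S + E := by
      rw [hEdef]; ring
    have hsum : ∑ j ∈ insert x t, ∏ i ∈ (insert x t).erase j, a i
        = (∏ i ∈ t, a i) + a x * S := by
      rw [Finset.sum_insert hxt, Finset.erase_insert hxt]
      congr 1
      rw [Finset.mul_sum]
      refine Finset.sum_congr rfl fun j hj => ?_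
      rw [Finset.erase_insert_of_ne (ne_of_mem_of_not_mem hj hxt).symm,
        Finset.prod_insert (fun h => hxt (Finset.mem_of_mem_erase h))]
    have key : (∏ i ∈ insert x t, (a i + ε)) - (∏ i ∈ insert x t, a i) -
        ε * ∑ j ∈ insert x t, ∏ i ∈ (insert x t).erase j, a i
        = ε ^ 2 * S + (a x + ε) * E := by
      rw [hsum, Finset.prod_insert hxt, Finset.prod_insert hxt, hProd]; ring
    rw [key]
    have hSn : ‖S‖ ≤ 1 := pnorm_sum_le _ _ zero_le_one
      (fun j hj => pnorm_prod_le _ _ fun i hi => ha' i (Finset.mem_of_mem_erase hi))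
    have h1 : ‖ε ^ 2 * S‖ ≤ ‖ε‖ ^ 2 := by
      rw [norm_mul, norm_pow]
      exact mul_le_of_le_one_right (by positivity) hSn
    have h2 : ‖(a x + ε) * E‖ ≤ ‖ε‖ ^ 2 := by
      rw [norm_mul]
      have : ‖a x + ε‖ ≤ 1 := le_trans (Padic.nonarchimedean _ _)
        (max_le (ha x (Finset.mem_insert_self _ _)) hε)
      calc ‖a x + ε‖ * ‖E‖ ≤ 1 * ‖ε‖^2 := mul_le_mul this hE (norm_nonneg _) zero_le_one
        _ = ‖ε‖^2 := one_mul _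
    exact le_trans (Padic.nonarchimedean _ _) (max_le h1 h2)

lemma pnorm_nat_one {k : ℕ} (h0 : k ≠ 0) (hk : k < p) : ‖(k : ℚ_[p])‖ = 1 := by
  have h1 : ‖((k:ℤ) : ℚ_[p])‖ ≤ 1 := Padic.norm_int_le_one _
  rcases lt_or_eq_of_le h1 with h | h
  · rw [Padic.norm_intCast_lt_one_iff] at h
    have h2 : (p:ℤ) ≤ (k:ℤ) := Int.le_of_dvd (by exact_mod_cast Nat.pos_of_ne_zero h0) h
    omega
  · exact_mod_cast h

lemma pnorm_H_le_one {n : ℕ} (hn : n ≤ p - 1) :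
    ‖∑ k ∈ Icc 1 n, 1/(k:ℚ_[p])‖ ≤ 1 := by
  have hp2 : 2 ≤ p := hpp.out.two_le
  refine pnorm_sum_le _ _ zero_le_one fun k hk => ?_
  rw [Finset.mem_Icc] at hk
  rw [one_div, norm_inv, pnorm_nat_one (by omega) (by omega)]
  norm_num

lemma pair_sum (m : ℕ) (hm : m ≤ p - 1) :
    ‖(∑ k ∈ Icc 1 m, 1/(k:ℚ_[p])) + ∑ k ∈ Icc (p-m) (p-1), 1/(k:ℚ_[p])‖ ≤ (p:ℝ)⁻¹ := by
  have hp2 : 2 ≤ p := hpp.out.two_le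
  have hrw : ∑ k ∈ Icc (p-m) (p-1), 1/(k:ℚ_[p]) = ∑ j ∈ Icc 1 m, 1/(((p-j:ℕ)):ℚ_[p]) := by
    refine Finset.sum_nbij' (fun k => p - k) (fun j => p - j) ?_ ?_ ?_ ?_ ?_
    · intro a ha; simp only [Finset.mem_Icc] at *; omega
    · intro a ha; simp only [Finset.mem_Icc] at *; omega
    · intro a ha; simp only [Finset.mem_Icc] at ha; omega
    · intro a ha; simp only [Finset.mem_Icc] at ha; omega
    · intro a ha; simp only [Finset.mem_Icc] at ha
      congr 2; omega
  rw [hrw, ← Finset.sum_add_distrib]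
  refine pnorm_sum_le _ _ (by positivity) fun j hj => ?_
  rw [Finset.mem_Icc] at hj
  have hj0 : (j:ℚ_[p]) ≠ 0 := Nat.cast_ne_zero.mpr (by omega)
  have hpj0 : ((p-j:ℕ):ℚ_[p]) ≠ 0 := Nat.cast_ne_zero.mpr (by omega)
  have heq : 1/(j:ℚ_[p]) + 1/((p-j:ℕ):ℚ_[p]) = (p:ℚ_[p]) * (1/(j:ℚ_[p])) * (1/((p-j:ℕ):ℚ_[p])) := by
    have hcast : ((p-j:ℕ):ℚ_[p]) = (p:ℚ_[p]) - (j:ℚ_[p]) := by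
      push_cast [Nat.cast_sub (by omega : j ≤ p)]; ring
    have h3 : (p:ℚ_[p]) - (j:ℚ_[p]) ≠ 0 := hcast ▸ hpj0
    rw [hcast, div_add_div _ _ hj0 h3, eq_comm, mul_assoc, one_div_mul_one_div, mul_one_div]
    congr 1; ring
  rw [heq, norm_mul, norm_mul, Padic.norm_p, one_div, norm_inv,
    pnorm_nat_one (by omega) (by omega), one_div, norm_inv,
    pnorm_nat_one (by omega) (by omega)]
  norm_num

lemma pnorm_H_top (hp : Odd p) : ‖∑ k ∈ Icc 1 (p-1), 1/(k:ℚ_[p])‖ ≤ (p:ℝ)⁻¹ := by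
  have hp2 : 2 ≤ p := hpp.out.two_le
  have h := pair_sum (p := p) (p-1) le_rfl
  rw [show p - (p-1) = 1 by omega] at h
  have h2 : ‖(2:ℚ_[p]) * ∑ k ∈ Icc 1 (p-1), 1/(k:ℚ_[p])‖ ≤ (p:ℝ)⁻¹ := by
    rw [two_mul]; exact h
  have hn2 : ‖(2:ℚ_[p])‖ = 1 := by
    have := pnorm_nat_one (p := p) (k := 2) (by omega) ?_
    · simpa using this
    · rcases hp with ⟨k, hk⟩; omega
  rw [norm_mul, hn2, one_mul] at h2
  exact h2

lemma pnorm_H_diff (hp : Odd p) (m : ℕ) (hm : m ≤ p - 1) :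
    ‖(∑ k ∈ Icc 1 m, 1/(k:ℚ_[p])) - ∑ k ∈ Icc 1 (p-1-m), 1/(k:ℚ_[p])‖ ≤ (p:ℝ)⁻¹ := by
  have hp2 : 2 ≤ p := hpp.out.two_le
  have hsplit : (∑ k ∈ Icc 1 (p-1-m), 1/(k:ℚ_[p])) + ∑ k ∈ Icc (p-m) (p-1), 1/(k:ℚ_[p])
      = ∑ k ∈ Icc 1 (p-1), 1/(k:ℚ_[p]) := by
    have e1 : Icc 1 (p-1-m) = Ioc 0 (p-1-m) := by ext x; simp [Finset.mem_Icc, Finset.mem_Ioc]; omega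
    have e2 : Icc (p-m) (p-1) = Ioc (p-1-m) (p-1) := by ext x; simp [Finset.mem_Icc, Finset.mem_Ioc]; omega
    have e3 : Icc 1 (p-1) = Ioc 0 (p-1) := by ext x; simp [Finset.mem_Icc, Finset.mem_Ioc]; omega
    rw [e1, e2, e3]
    exact Finset.sum_Ioc_consecutive _ (by omega) (by omega)
  have key : (∑ k ∈ Icc 1 m, 1/(k:ℚ_[p])) - ∑ k ∈ Icc 1 (p-1-m), 1/(k:ℚ_[p])
      = ((∑ k ∈ Icc 1 m, 1/(k:ℚ_[p])) + ∑ k ∈ Icc (p-m) (p-1), 1/(k:ℚ_[p]))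
        + (-(∑ k ∈ Icc 1 (p-1), 1/(k:ℚ_[p]))) := by
    rw [← hsplit]; ring
  rw [key]
  refine le_trans (Padic.nonarchimedean _ _) (max_le (pair_sum m hm) ?_)
  rw [norm_neg]
  exact pnorm_H_top hp

lemma pnorm_sub_max {a b : ℚ_[p]} {C : ℝ} (ha : ‖a‖ ≤ C) (hb : ‖b‖ ≤ C) : ‖a - b‖ ≤ C := by
  rw [sub_eq_add_neg]
  exact le_trans (Padic.nonarchimedean _ _) (max_le ha (by rwa [norm_neg]))

lemma pnorm_nat_le_one (k : ℕ) : ‖(k : ℚ_[p])‖ ≤ 1 := by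
  have := Padic.norm_int_le_one (p := p) (k : ℤ)
  simpa using this

lemma fact_prod_nat (m : ℕ) (hm : m ≤ p - 1) :
    (p - 1 - m).factorial * ∏ k ∈ Icc 1 m, (p - k) = (p-1).factorial := by
  have hp2 : 2 ≤ p := hpp.out.two_le
  induction m with
  | zero => simp
  | succ n ih =>
    have hn : n ≤ p - 1 := by omega
    rw [Finset.prod_Icc_succ_top (by omega : 1 ≤ n+1)]
    have h0 : 0 < p - (n+1) := by omega
    have h3 : (p - (n+1)) * (p - (n+1) - 1).factorial = (p - (n+1)).factorial :=
      Nat.mul_factorial_pred h0.ne'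
    have e1 : p - (n+1) - 1 = p - 1 - (n+1) := by omega
    have e2 : p - (n+1) = p - 1 - n := by omega
    rw [e1, e2] at h3
    rw [← ih hn, ← h3, e2]
    ring

lemma Cm_approx (m : ℕ) (hm : m ≤ p - 1) :
    ‖(∏ k ∈ Icc 1 m, ((p:ℚ_[p]) - k)) -
      (-1)^m * (m.factorial : ℚ_[p]) * (1 - p * ∑ k ∈ Icc 1 m, 1/(k:ℚ_[p]))‖
      ≤ ((p:ℝ)⁻¹)^2 := by
  have hp2 : 2 ≤ p := hpp.out.two_le
  induction m with
  | zero => simp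
  | succ n ih =>
    have hn : n ≤ p - 1 := by omega
    have hE := ih hn
    set H := ∑ k ∈ Icc 1 n, 1/(k:ℚ_[p]) with hHd
    set C := ∏ k ∈ Icc 1 n, ((p:ℚ_[p]) - k) with hCd
    set E := C - (-1)^n * (n.factorial : ℚ_[p]) * (1 - p*H) with hEd
    have hne : ((n:ℚ_[p]) + 1) ≠ 0 := by
      have : (((n+1:ℕ)) : ℚ_[p]) ≠ 0 := Nat.cast_ne_zero.mpr (Nat.succ_ne_zero n)
      push_cast at this; exact this
    have hprod : ∏ k ∈ Icc 1 (n+1), ((p:ℚ_[p]) - k) = C * ((p:ℚ_[p]) - (n+1)) := by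
      rw [Finset.prod_Icc_succ_top (by omega : 1 ≤ n+1)]
      push_cast; ring
    have hH : ∑ k ∈ Icc 1 (n+1), 1/(k:ℚ_[p]) = H + 1/((n:ℚ_[p])+1) := by
      rw [Finset.sum_Icc_succ_top (by omega : 1 ≤ n+1)]
      push_cast; ring
    have key : (∏ k ∈ Icc 1 (n+1), ((p:ℚ_[p]) - k)) -
        (-1)^(n+1) * ((n+1).factorial : ℚ_[p]) * (1 - p * ∑ k ∈ Icc 1 (n+1), 1/(k:ℚ_[p]))
        = ((p:ℚ_[p]) - (n+1)) * E - (-1)^n * (n.factorial : ℚ_[p]) * p^2 * H := by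
      rw [hprod, hH, hEd]
      push_cast [Nat.factorial_succ]
      field_simp
      ring
    rw [key]
    refine pnorm_sub_max ?_ ?_
    · rw [norm_mul]
      have h1 : ‖(p:ℚ_[p]) - ((n:ℚ_[p])+1)‖ ≤ 1 := by
        have : ((((p:ℤ) - (n+1)) : ℤ) : ℚ_[p]) = (p:ℚ_[p]) - ((n:ℚ_[p])+1) := by push_cast; ring
        rw [← this]
        exact Padic.norm_int_le_one _
      calc ‖(p:ℚ_[p]) - ((n:ℚ_[p])+1)‖ * ‖E‖ ≤ 1 * ((p:ℝ)⁻¹)^2 :=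
            mul_le_mul h1 hE (norm_nonneg _) zero_le_one
        _ = ((p:ℝ)⁻¹)^2 := one_mul _
    · rw [norm_mul, norm_mul, norm_mul, norm_pow, norm_pow, norm_neg, norm_one, one_pow,
        one_mul, Padic.norm_p]
      have hHn : ‖H‖ ≤ 1 := pnorm_H_le_one hn
      have hfn : ‖(n.factorial : ℚ_[p])‖ ≤ 1 := pnorm_nat_le_one _
      calc ‖(n.factorial : ℚ_[p])‖ * ((p:ℝ)⁻¹)^2 * ‖H‖
          ≤ 1 * ((p:ℝ)⁻¹)^2 * 1 := by
            apply mul_le_mul _ hHn (norm_nonneg _) (by positivity)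
            exact mul_le_mul_of_nonneg_right hfn (by positivity)
        _ = ((p:ℝ)⁻¹)^2 := by ring

lemma prod_desc (n : ℕ) : ∏ i ∈ range n, ((n:ℚ_[p]) - i) = (n.factorial : ℚ_[p]) := by
  have h1 : ∏ j ∈ range n, (((n - 1 - j : ℕ) + 1 : ℕ) : ℚ_[p])
      = ∏ j ∈ range n, (((j+1:ℕ)) : ℚ_[p]) :=
    Finset.prod_range_reflect (fun j => (((j+1:ℕ)) : ℚ_[p])) n
  have h2 : ∏ i ∈ range n, ((n:ℚ_[p]) - i) = ∏ j ∈ range n, (((n - 1 - j : ℕ) + 1 : ℕ) : ℚ_[p]) := by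
    refine Finset.prod_congr rfl fun j hj => ?_
    rw [Finset.mem_range] at hj
    have : (n - 1 - j + 1 : ℕ) = n - j := by omega
    rw [this, Nat.cast_sub (by omega)]
  rw [h2, h1, ← Nat.cast_prod]
  norm_cast
  exact Finset.prod_range_add_one_eq_factorial n

lemma H_as_range (n : ℕ) :
    ∑ k ∈ Icc 1 n, 1/(k:ℚ_[p]) = ∑ i ∈ range n, 1/(((i+1:ℕ)):ℚ_[p]) := by
  rw [← Finset.Ico_add_one_right_eq_Icc, Finset.sum_Ico_eq_sum_range]
  simp [add_comm]

lemma erase_split (m : ℕ) (hm1 : 1 ≤ m) (hm : m ≤ p - 1) :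
    (range (p-1)).erase (m-1) = (range (m-1)) ∪ Ico m (p-1) := by
  ext x
  simp only [Finset.mem_erase, Finset.mem_range, Finset.mem_union, Finset.mem_Ico]
  omega

lemma erase_disj (m : ℕ) : Disjoint (range (m-1)) (Ico m (p-1)) := by
  rw [Finset.disjoint_left]
  intro x hx hx2
  rw [Finset.mem_range] at hx
  rw [Finset.mem_Ico] at hx2
  omega

lemma P_eq (m : ℕ) (hm1 : 1 ≤ m) (hm : m ≤ p - 1) :
    ∏ i ∈ (range (p-1)).erase (m-1), ((m:ℚ_[p]) - 1 - i)
    = (-1)^(p-1-m) * (((m-1).factorial : ℚ_[p])) * (((p-1-m).factorial : ℚ_[p])) := by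
  rw [erase_split m hm1 hm, Finset.prod_union (erase_disj m)]
  have part1 : ∏ i ∈ range (m-1), ((m:ℚ_[p]) - 1 - i) = ((m-1).factorial : ℚ_[p]) := by
    rw [← prod_desc (m-1)]
    refine Finset.prod_congr rfl fun i hi => ?_
    rw [Nat.cast_sub hm1]
    push_cast; ring
  have part2 : ∏ i ∈ Ico m (p-1), ((m:ℚ_[p]) - 1 - i)
      = (-1)^(p-1-m) * ((p-1-m).factorial : ℚ_[p]) := by
    rw [Finset.prod_Ico_eq_prod_range]
    have : ∀ j, (m:ℚ_[p]) - 1 - ((m + j : ℕ):ℚ_[p]) = (-1) * (((j+1:ℕ)):ℚ_[p]) := by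
      intro j; push_cast; ring
    rw [Finset.prod_congr rfl fun j _ => this j, Finset.prod_mul_distrib,
      Finset.prod_const, Finset.card_range, ← Nat.cast_prod]
    norm_cast
    rw [Finset.prod_range_add_one_eq_factorial]
  rw [part1, part2]; ring

lemma A_eq (m : ℕ) (hm1 : 1 ≤ m) (hm : m ≤ p - 1) :
    ∑ i ∈ (range (p-1)).erase (m-1), 1/((m:ℚ_[p]) - 1 - i)
    = (∑ k ∈ Icc 1 (m-1), 1/(k:ℚ_[p])) - ∑ k ∈ Icc 1 (p-1-m), 1/(k:ℚ_[p]) := by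
  rw [erase_split m hm1 hm, Finset.sum_union (erase_disj m)]
  have part1 : ∑ i ∈ range (m-1), 1/((m:ℚ_[p]) - 1 - i) = ∑ k ∈ Icc 1 (m-1), 1/(k:ℚ_[p]) := by
    rw [H_as_range]
    have h1 : ∑ j ∈ range (m-1), (1 / ((((m-1) - 1 - j : ℕ) + 1 : ℕ) : ℚ_[p]))
        = ∑ j ∈ range (m-1), 1/((((j+1:ℕ)) : ℚ_[p])) :=
      Finset.sum_range_reflect (fun j => 1/((((j+1:ℕ)) : ℚ_[p]))) (m-1)
    rw [← h1]
    refine Finset.sum_congr rfl fun j hj => ?_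
    rw [Finset.mem_range] at hj
    congr 1
    have : (m - 1 - 1 - j + 1 : ℕ) = m - 1 - j := by omega
    rw [this, Nat.cast_sub (by omega), Nat.cast_sub (by omega)]
    push_cast; ring
  have part2 : ∑ i ∈ Ico m (p-1), 1/((m:ℚ_[p]) - 1 - i)
      = -∑ k ∈ Icc 1 (p-1-m), 1/(k:ℚ_[p]) := by
    rw [Finset.sum_Ico_eq_sum_range, H_as_range, ← Finset.sum_neg_distrib]
    refine Finset.sum_congr rfl fun j hj => ?_
    have h2 : (m:ℚ_[p]) - 1 - ((m + j : ℕ):ℚ_[p]) = -(((j+1:ℕ)):ℚ_[p]) := by push_cast; ring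
    rw [h2, div_neg]
  rw [part1, part2]; ring


lemma pnorm_nat_one' {k : ℕ} (hk : ¬ (p ∣ k)) : ‖(k : ℚ_[p])‖ = 1 := by
  have h1 : ‖((k:ℤ) : ℚ_[p])‖ ≤ 1 := Padic.norm_int_le_one _
  rcases lt_or_eq_of_le h1 with h | h
  · rw [Padic.norm_intCast_lt_one_iff] at h
    exact absurd (Int.ofNat_dvd.mp h) hk
  · exact_mod_cast h

lemma pnorm_F_one : ‖(((p-1).factorial : ℕ) : ℚ_[p])‖ = 1 := by
  refine pnorm_nat_one' ?_
  rw [Nat.Prime.dvd_factorial hpp.out]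
  have := hpp.out.two_le
  omega

lemma pnorm_Cm_one (m : ℕ) (hm : m ≤ p - 1) :
    ‖∏ k ∈ Icc 1 m, ((p:ℚ_[p]) - k)‖ = 1 := by
  have hp2 : 2 ≤ p := hpp.out.two_le
  rw [norm_prod]
  refine Finset.prod_eq_one fun k hk => ?_
  rw [Finset.mem_Icc] at hk
  have : (p:ℚ_[p]) - k = (((p - k : ℕ)) : ℚ_[p]) := by
    rw [Nat.cast_sub (by omega)]
  rw [this, pnorm_nat_one (by omega) (by omega)]

lemma pnorm_mul_le_one {a b : ℚ_[p]} (ha : ‖a‖ ≤ 1) (hb : ‖b‖ ≤ 1) : ‖a*b‖ ≤ 1 := by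
  rw [norm_mul]; exact mul_le_one₀ ha (norm_nonneg _) hb

lemma pnorm_mul_unit {a b : ℚ_[p]} {C : ℝ} (ha : ‖a‖ ≤ 1) (hb : ‖b‖ ≤ C) : ‖a * b‖ ≤ C := by
  rw [norm_mul]
  calc ‖a‖*‖b‖ ≤ 1*C := mul_le_mul ha hb (norm_nonneg _) zero_le_one
    _ = C := one_mul C

lemma pnorm_one_add_pH {x : ℚ_[p]} (hx : ‖x‖ ≤ 1) : ‖(1:ℚ_[p]) + p * x‖ ≤ 1 := by
  refine le_trans (Padic.nonarchimedean _ _) (max_le (by norm_num) ?_)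
  refine pnorm_mul_unit ?_ hx
  rw [Padic.norm_p]
  have hp2 : 2 ≤ p := hpp.out.two_le
  rw [inv_le_one_iff₀]; right; exact_mod_cast le_trans one_le_two hp2

lemma neg_one_pow_eq (hp : Odd p) (m : ℕ) (hm : m ≤ p - 1) :
    ((-1 : ℚ_[p]))^(p-1-m) = (-1)^m := by
  have hp2 : 2 ≤ p := hpp.out.two_le
  have heven : Even (p - 1) := Nat.Odd.sub_odd hp odd_one
  have h1 : ((-1 : ℚ_[p]))^(p-1-m) * (-1)^m = 1 := by
    rw [← pow_add, show p - 1 - m + m = p - 1 by omega, heven.neg_one_pow]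
  have h2 : ((-1 : ℚ_[p]))^m * (-1)^m = 1 := by
    rw [← pow_add, ← two_mul, pow_mul]; norm_num
  calc ((-1 : ℚ_[p]))^(p-1-m) = ((-1 : ℚ_[p]))^(p-1-m) * ((-1)^m * (-1)^m) := by rw [h2]; ring
    _ = (((-1 : ℚ_[p]))^(p-1-m) * (-1)^m) * (-1)^m := by ring
    _ = (-1)^m := by rw [h1]; ring

lemma hmP_eq (hp : Odd p) (m : ℕ) (hm1 : 1 ≤ m) (hm : m ≤ p - 1) :
    (m:ℚ_[p]) * ∏ i ∈ (range (p-1)).erase (m-1), ((m:ℚ_[p]) - 1 - i)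
    = (-1)^m * (m.factorial : ℚ_[p]) * ((p-1-m).factorial : ℚ_[p]) := by
  rw [P_eq m hm1 hm, neg_one_pow_eq hp m hm]
  have h : (m:ℚ_[p]) * ((m-1).factorial : ℚ_[p]) = (m.factorial : ℚ_[p]) := by
    rw [← Nat.cast_mul, Nat.mul_factorial_pred (by omega)]
  calc (m:ℚ_[p]) * ((-1)^m * ((m-1).factorial : ℚ_[p]) * ((p-1-m).factorial : ℚ_[p]))
      = (-1)^m * ((m:ℚ_[p]) * ((m-1).factorial : ℚ_[p])) * ((p-1-m).factorial : ℚ_[p]) := by ring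
    _ = _ := by rw [h]

lemma hCeq (m : ℕ) (hm : m ≤ p - 1) :
    ((p-1-m).factorial : ℚ_[p]) * ∏ k ∈ Icc 1 m, ((p:ℚ_[p]) - k)
    = (((p-1).factorial : ℕ) : ℚ_[p]) := by
  have hp2 : 2 ≤ p := hpp.out.two_le
  have h1 : ∏ k ∈ Icc 1 m, ((p:ℚ_[p]) - k) = ((∏ k ∈ Icc 1 m, (p - k) : ℕ) : ℚ_[p]) := by
    rw [Nat.cast_prod]
    refine Finset.prod_congr rfl fun k hk => ?_
    rw [Finset.mem_Icc] at hk
    rw [Nat.cast_sub (by omega)]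
  rw [h1, ← Nat.cast_mul, fact_prod_nat m hm]

lemma Pm_approx (hp : Odd p) (m : ℕ) (hm1 : 1 ≤ m) (hm : m ≤ p - 1) :
    ‖(m:ℚ_[p]) * (∏ i ∈ (range (p-1)).erase (m-1), ((m:ℚ_[p]) - 1 - i))
      - (((p-1).factorial : ℕ) : ℚ_[p]) * (1 + p * ∑ k ∈ Icc 1 m, 1/(k:ℚ_[p]))‖
    ≤ ((p:ℝ)⁻¹)^2 := by
  have hp2 : 2 ≤ p := hpp.out.two_le
  set Hm := ∑ k ∈ Icc 1 m, 1/(k:ℚ_[p]) with hHmd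
  set Cm := ∏ k ∈ Icc 1 m, ((p:ℚ_[p]) - k) with hCmd
  set F : ℚ_[p] := (((p-1).factorial : ℕ) : ℚ_[p]) with hFd
  set P := ∏ i ∈ (range (p-1)).erase (m-1), ((m:ℚ_[p]) - 1 - i) with hPd
  set E3 := Cm - (-1)^m * (m.factorial : ℚ_[p]) * (1 - p*Hm) with hE3d
  have hE3 : ‖E3‖ ≤ ((p:ℝ)⁻¹)^2 := Cm_approx m hm
  have h1 : (m:ℚ_[p]) * P = (-1)^m * (m.factorial : ℚ_[p]) * ((p-1-m).factorial : ℚ_[p]) :=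
    hmP_eq hp m hm1 hm
  have h2 : ((p-1-m).factorial : ℚ_[p]) * Cm = F := hCeq m hm
  have key : ((m:ℚ_[p]) * P - F * (1 + p*Hm)) * Cm
      = ((-1)^m * (m.factorial : ℚ_[p]) * F * Hm^2) * (p:ℚ_[p])^2
        - (F * (1 + p*Hm)) * E3 := by
    linear_combination Cm * h1 + ((-1:ℚ_[p]))^m * (m.factorial : ℚ_[p]) * h2
      - F * (1 + p*Hm) * hE3d
  have hnorm : ‖(m:ℚ_[p]) * P - F * (1 + p*Hm)‖
      = ‖((m:ℚ_[p]) * P - F * (1 + p*Hm)) * Cm‖ := by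
    rw [norm_mul, pnorm_Cm_one m hm, mul_one]
  rw [hnorm, key]
  have hHm : ‖Hm‖ ≤ 1 := pnorm_H_le_one hm
  have hF : ‖F‖ ≤ 1 := le_of_eq pnorm_F_one
  have hsq : ‖Hm^2‖ ≤ 1 := by rw [norm_pow]; exact pow_le_one₀ (norm_nonneg _) hHm
  have hneg : ‖((-1:ℚ_[p]))^m‖ ≤ 1 := by rw [norm_pow, norm_neg, norm_one, one_pow]
  refine pnorm_sub_max ?_ ?_
  · rw [norm_mul, norm_pow, Padic.norm_p]
    refine mul_le_of_le_one_left (by positivity) ?_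
    exact pnorm_mul_le_one (pnorm_mul_le_one (pnorm_mul_le_one hneg (pnorm_nat_le_one _)) hF) hsq
  · exact pnorm_mul_unit (pnorm_mul_le_one hF (pnorm_one_add_pH hHm)) hE3

lemma Fm_approx (hp : Odd p) (m : ℕ) (hm1 : 1 ≤ m) (hm : m ≤ p - 1) :
    ‖(((p-1).factorial : ℕ) : ℚ_[p])
      - (m:ℚ_[p]) * (∏ i ∈ (range (p-1)).erase (m-1), ((m:ℚ_[p]) - 1 - i))‖
    ≤ (p:ℝ)⁻¹ := by
  have hp2 : 2 ≤ p := hpp.out.two_le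
  have hr1 : ((p:ℝ)⁻¹) ≤ 1 := by
    rw [inv_le_one_iff₀]; right; exact_mod_cast le_trans one_le_two hp2
  have hrsq : ((p:ℝ)⁻¹)^2 ≤ (p:ℝ)⁻¹ := by
    calc ((p:ℝ)⁻¹)^2 = (p:ℝ)⁻¹ * (p:ℝ)⁻¹ := sq _
      _ ≤ 1 * (p:ℝ)⁻¹ := by
          apply mul_le_mul_of_nonneg_right hr1 (by positivity)
      _ = (p:ℝ)⁻¹ := one_mul _
  set Hm := ∑ k ∈ Icc 1 m, 1/(k:ℚ_[p]) with hHmd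
  set Cm := ∏ k ∈ Icc 1 m, ((p:ℚ_[p]) - k) with hCmd
  set F : ℚ_[p] := (((p-1).factorial : ℕ) : ℚ_[p]) with hFd
  set P := ∏ i ∈ (range (p-1)).erase (m-1), ((m:ℚ_[p]) - 1 - i) with hPd
  set E3 := Cm - (-1)^m * (m.factorial : ℚ_[p]) * (1 - p*Hm) with hE3d
  have hE3 : ‖E3‖ ≤ ((p:ℝ)⁻¹)^2 := Cm_approx m hm
  have h1 : (m:ℚ_[p]) * P = (-1)^m * (m.factorial : ℚ_[p]) * ((p-1-m).factorial : ℚ_[p]) :=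
    hmP_eq hp m hm1 hm
  have h2 : ((p-1-m).factorial : ℚ_[p]) * Cm = F := hCeq m hm
  have key : (F - (m:ℚ_[p]) * P) * Cm
      = (-((-1:ℚ_[p]))^m * (m.factorial : ℚ_[p]) * F * Hm) * (p:ℚ_[p]) + F * E3 := by
    linear_combination (-Cm) * h1 - ((-1:ℚ_[p]))^m * (m.factorial : ℚ_[p]) * h2 + F * hE3d
  have hnorm : ‖F - (m:ℚ_[p]) * P‖ = ‖(F - (m:ℚ_[p]) * P) * Cm‖ := by
    rw [norm_mul, pnorm_Cm_one m hm, mul_one]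
  rw [hnorm, key]
  have hHm : ‖Hm‖ ≤ 1 := pnorm_H_le_one hm
  have hF : ‖F‖ ≤ 1 := le_of_eq pnorm_F_one
  have hneg : ‖(-((-1:ℚ_[p]))^m)‖ ≤ 1 := by rw [norm_neg, norm_pow, norm_neg, norm_one, one_pow]
  refine le_trans (Padic.nonarchimedean _ _) (max_le ?_ ?_)
  · rw [norm_mul, Padic.norm_p]
    refine mul_le_of_le_one_left (by positivity) ?_
    exact pnorm_mul_le_one (pnorm_mul_le_one (pnorm_mul_le_one hneg (pnorm_nat_le_one _)) hF) hHm
  · exact le_trans (pnorm_mul_unit hF hE3) hrsq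

lemma Dm_approx (hp : Odd p) (m : ℕ) (hm1 : 1 ≤ m) (hm : m ≤ p - 1) :
    ‖(m:ℚ_[p])^2 * (∑ j ∈ (range (p-1)).erase (m-1),
        ∏ i ∈ ((range (p-1)).erase (m-1)).erase j, ((m:ℚ_[p]) - 1 - i))
      + (((p-1).factorial : ℕ) : ℚ_[p])‖ ≤ (p:ℝ)⁻¹ := by
  have hp2 : 2 ≤ p := hpp.out.two_le
  set S := (range (p-1)).erase (m-1) with hSd
  set P := ∏ i ∈ S, ((m:ℚ_[p]) - 1 - i) with hPd
  set D := ∑ j ∈ S, ∏ i ∈ S.erase j, ((m:ℚ_[p]) - 1 - i) with hDd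
  set F : ℚ_[p] := (((p-1).factorial : ℕ) : ℚ_[p]) with hFd
  set A := ∑ j ∈ S, 1/((m:ℚ_[p]) - 1 - j) with hAd
  have hm0 : (m:ℚ_[p]) ≠ 0 := Nat.cast_ne_zero.mpr (by omega)
  have hane : ∀ j ∈ S, ((m:ℚ_[p]) - 1 - j) ≠ 0 := by
    intro j hj
    rw [hSd, Finset.mem_erase, Finset.mem_range] at hj
    have : (m:ℚ_[p]) - 1 - j = (((m:ℤ) - 1 - j : ℤ) : ℚ_[p]) := by push_cast; ring
    rw [this, Int.cast_ne_zero]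
    omega
  have hD : D = P * A := by
    rw [hDd, hAd, Finset.mul_sum]
    refine Finset.sum_congr rfl fun j hj => ?_
    rw [mul_one_div, eq_div_iff (hane j hj)]
    exact Finset.prod_erase_mul S _ hj
  have hA : A = (∑ k ∈ Icc 1 (m-1), 1/(k:ℚ_[p])) - ∑ k ∈ Icc 1 (p-1-m), 1/(k:ℚ_[p]) :=
    A_eq m hm1 hm
  have hsplit : ∑ k ∈ Icc 1 m, 1/(k:ℚ_[p])
      = (∑ k ∈ Icc 1 (m-1), 1/(k:ℚ_[p])) + 1/(m:ℚ_[p]) := by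
    have h := Finset.sum_Icc_succ_top (by omega : 1 ≤ (m-1)+1) (fun k => 1/(k:ℚ_[p]))
    rw [show m - 1 + 1 = m by omega] at h
    exact h
  have key : (m:ℚ_[p])^2 * D + F
      = ((m:ℚ_[p]) * P * m) * ((∑ k ∈ Icc 1 m, 1/(k:ℚ_[p])) - ∑ k ∈ Icc 1 (p-1-m), 1/(k:ℚ_[p]))
        + (F - (m:ℚ_[p]) * P) := by
    rw [hD, hA, hsplit]
    field_simp
    ring
  rw [key]
  have hPn : ‖P‖ ≤ 1 := by
    refine pnorm_prod_le _ _ fun i hi => ?_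
    have : (m:ℚ_[p]) - 1 - i = (((m:ℤ) - 1 - i : ℤ) : ℚ_[p]) := by push_cast; ring
    rw [this]
    exact Padic.norm_int_le_one _
  have hmn : ‖(m:ℚ_[p])‖ ≤ 1 := pnorm_nat_le_one _
  refine le_trans (Padic.nonarchimedean _ _) (max_le ?_ ?_)
  · exact pnorm_mul_unit (pnorm_mul_le_one (pnorm_mul_le_one hmn hPn) hmn)
      (pnorm_H_diff hp m hm)
  · exact Fm_approx hp m hm1 hm

lemma exists_padic (n : ℕ) (x : ℚ_[p]) (h : ‖x‖ ≤ ((p:ℝ)⁻¹)^n) :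
    ∃ c : ℤ_[p], x = (p:ℚ_[p])^n * c := by
  have hp2 : 2 ≤ p := hpp.out.two_le
  have hp0 : (p:ℚ_[p]) ≠ 0 := Nat.cast_ne_zero.mpr (by omega)
  have hc : ‖x / (p:ℚ_[p])^n‖ ≤ 1 := by
    rw [norm_div, norm_pow, Padic.norm_p, div_le_one (by positivity)]
    exact h
  refine ⟨⟨x/(p:ℚ_[p])^n, hc⟩, ?_⟩
  show x = (p:ℚ_[p])^n * (x/(p:ℚ_[p])^n)
  field_simp

set_option maxHeartbeats 1000000 in
theorem stmt8 (p : ℕ) [Fact p.Prime] (hp : Odd p) (m : ℕ) (hm1 : 1 ≤ m) (hmp : m ≤ p - 1)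
    (s : ℤ_[p]) :
    ∃ c : ℤ_[p],
      gbinom ((m : ℚ_[p]) + (p : ℚ_[p]) * (s : ℚ_[p]) - 1) (p - 1) -
        ((p : ℚ_[p]) * (s : ℚ_[p]) / (m : ℚ_[p]) -
          (p : ℚ_[p]) ^ 2 * (s : ℚ_[p]) ^ 2 / (m : ℚ_[p]) ^ 2 +
          (p : ℚ_[p]) ^ 2 * (s : ℚ_[p]) / (m : ℚ_[p]) *
            (∑ k ∈ Finset.Icc 1 m, 1 / (k : ℚ_[p]))) =
      (p : ℚ_[p]) ^ 3 * (c : ℚ_[p]) := by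
  have hprime : p.Prime := Fact.out
  have hp2 : 2 ≤ p := hprime.two_le
  have hm0 : (m:ℚ_[p]) ≠ 0 := Nat.cast_ne_zero.mpr (by omega)
  have hF0 : (((p-1).factorial : ℕ) : ℚ_[p]) ≠ 0 := Nat.cast_ne_zero.mpr (Nat.factorial_ne_zero _)
  have hp0 : (p:ℚ_[p]) ≠ 0 := Nat.cast_ne_zero.mpr (by omega)
  set S := (range (p-1)).erase (m-1) with hSd
  set P := ∏ i ∈ S, ((m:ℚ_[p]) - 1 - i) with hPd
  set D := ∑ j ∈ S, ∏ i ∈ S.erase j, ((m:ℚ_[p]) - 1 - i) with hDd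
  set F : ℚ_[p] := (((p-1).factorial : ℕ) : ℚ_[p]) with hFd
  set Hm := ∑ k ∈ Icc 1 m, 1/(k:ℚ_[p]) with hHmd
  set ε := (p:ℚ_[p]) * (s:ℚ_[p]) with hεd
  set M := ∏ i ∈ S, (((m:ℚ_[p]) - 1 - i) + ε) with hMd
  set E1 := M - P - ε * D with hE1d
  have hmem : m - 1 ∈ range (p-1) := by rw [Finset.mem_range]; omega
  have hnum : ∏ i ∈ range (p-1), (((m:ℚ_[p]) + ε - 1) - (i:ℚ_[p])) = ε * M := by
    calc ∏ i ∈ range (p-1), (((m:ℚ_[p]) + ε - 1) - (i:ℚ_[p]))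
        = ∏ i ∈ range (p-1), (((m:ℚ_[p]) - 1 - i) + ε) :=
          Finset.prod_congr rfl fun i _ => by ring
      _ = (((m:ℚ_[p]) - 1 - ((m-1:ℕ):ℚ_[p])) + ε) * M :=
          (Finset.mul_prod_erase _ _ hmem).symm
      _ = ε * M := by rw [Nat.cast_sub hm1]; push_cast; ring
  have hgb : gbinom ((m:ℚ_[p]) + ε - 1) (p-1) = ε * M / F := by
    unfold gbinom
    rw [hnum, ← hFd]
  have hεn : ‖ε‖ ≤ (p:ℝ)⁻¹ := by
    rw [hεd, norm_mul, Padic.norm_p, PadicInt.padic_norm_e_of_padicInt]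
    exact mul_le_of_le_one_right (by positivity) s.norm_le_one
  have hrle1 : ((p:ℝ)⁻¹) ≤ 1 := by
    rw [inv_le_one_iff₀]; right; exact_mod_cast le_trans one_le_two hp2
  have hε1 : ‖ε‖ ≤ 1 := le_trans hεn hrle1
  have haS : ∀ i ∈ S, ‖(m:ℚ_[p]) - 1 - (i:ℚ_[p])‖ ≤ 1 := by
    intro i _
    have h : (m:ℚ_[p]) - 1 - i = (((m:ℤ) - 1 - i : ℤ) : ℚ_[p]) := by push_cast; ring
    rw [h]
    exact Padic.norm_int_le_one _
  have hE1n' := key_prod S (fun i => (m:ℚ_[p]) - 1 - (i:ℚ_[p])) haS ε hε1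
  have hE1n : ‖E1‖ ≤ ‖ε‖^2 := by
    rw [hE1d, hMd, hPd, hDd]
    simpa using hE1n'
  have hXn : ‖(m:ℚ_[p]) * P - F * (1 + (p:ℚ_[p])*Hm)‖ ≤ ((p:ℝ)⁻¹)^2 := by
    rw [hPd, hFd, hHmd]
    exact Pm_approx hp m hm1 hmp
  have hYn : ‖(m:ℚ_[p])^2 * D + F‖ ≤ (p:ℝ)⁻¹ := by
    rw [hDd, hFd]
    exact Dm_approx hp m hm1 hmp
  have hFn : ‖F‖ = 1 := by rw [hFd]; exact pnorm_F_one
  clear_value S P D F Hm ε M E1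
  have hmn1 : ‖(m:ℚ_[p])‖ = 1 := pnorm_nat_one (by omega) (by omega)
  have hGid : gbinom ((m:ℚ_[p]) + ε - 1) (p-1) -
      (ε/(m:ℚ_[p]) - (p:ℚ_[p])^2*(s:ℚ_[p])^2/(m:ℚ_[p])^2 + (p:ℚ_[p])^2*(s:ℚ_[p])/(m:ℚ_[p])*Hm)
      = ε * (((m:ℚ_[p]) * P - F * (1 + (p:ℚ_[p])*Hm))/((m:ℚ_[p])*F))
        + ε^2 * ((((m:ℚ_[p])^2 * D + F))/((m:ℚ_[p])^2*F))
        + ε * (E1/F) := by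
    rw [hgb, hE1d, hεd]
    field_simp [hm0, hF0]
    ring
  apply exists_padic 3
  rw [hGid]
  refine pnorm_triple ?_ ?_ ?_
  · rw [norm_mul, norm_div, norm_mul, hmn1, hFn, mul_one, div_one]
    calc ‖ε‖ * ‖(m:ℚ_[p]) * P - F * (1 + (p:ℚ_[p])*Hm)‖
        ≤ (p:ℝ)⁻¹ * ((p:ℝ)⁻¹)^2 := mul_le_mul hεn hXn (norm_nonneg _) (by positivity)
      _ = ((p:ℝ)⁻¹)^3 := by ring
  · rw [norm_mul, norm_pow, norm_div, norm_mul, norm_pow, hmn1, hFn, one_pow, mul_one, div_one]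
    calc ‖ε‖^2 * ‖(m:ℚ_[p])^2 * D + F‖
        ≤ ((p:ℝ)⁻¹)^2 * (p:ℝ)⁻¹ := by
          apply mul_le_mul _ hYn (norm_nonneg _) (by positivity)
          exact pow_le_pow_left₀ (norm_nonneg _) hεn 2
      _ = ((p:ℝ)⁻¹)^3 := by ring
  · rw [norm_mul, norm_div, hFn, div_one]
    calc ‖ε‖ * ‖E1‖ ≤ (p:ℝ)⁻¹ * ((p:ℝ)⁻¹)^2 := by
          apply mul_le_mul hεn _ (norm_nonneg _) (by positivity)
          exact le_trans hE1n (pow_le_pow_left₀ (norm_nonneg _) hεn 2)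
      _ = ((p:ℝ)⁻¹)^3 := by ring
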